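/- arXiv:1702.01421 — 3 statements merged into one kernel-verified Lean document; each statement's English description precedes it below -/
import Mathlib

section
/- Let h be an n×n real symmetric matrix with Frobenius norm ‖h‖ < n. Then -log det(n·I + h) ≤ -n·log n - tr(h)/n + ‖h‖²/(2n(n - ‖h‖)). -/
open Matrix

lemma neg_log_one_add_le {a y : ℝ} (ha : a < 1) (hy : |y| ≤ a) :
    -Real.log (1 + y) ≤ -y + y ^ 2 / (2 * (1 - a)) := by
  have ha0 : 0 ≤ a := le_trans (abs_nonneg y) hy
  have ha1 : (0:ℝ) < 1 - a := by linarith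
  set f : ℝ → ℝ := fun y => Real.log (1 + y) - y + y ^ 2 / (2 * (1 - a)) with hf
  have key : ∀ x : ℝ, -1 < x → HasDerivAt f (1 / (1 + x) - 1 + x / (1 - a)) x := by
    intro x hx1
    have h1 : (1:ℝ) + x ≠ 0 := by linarith
    have hlog : HasDerivAt (fun y : ℝ => Real.log (1 + y)) (1 / (1 + x)) x := by
      have := (Real.hasDerivAt_log h1).comp x ((hasDerivAt_id x).const_add 1)
      simpa [one_div, Function.comp_def] using this
    have hq : HasDerivAt (fun y : ℝ => y ^ 2 / (2 * (1 - a))) (x / (1 - a)) x := by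
      have := (hasDerivAt_pow 2 x).div_const (2 * (1 - a))
      convert this using 1
      · rfl
      · rfl
      rw [pow_one]
      rw [show ((2:ℕ):ℝ) * x / (2 * (1 - a)) = (2 * x) / (2 * (1-a)) by norm_num]
      rw [mul_div_mul_left x (1 - a) two_ne_zero]
    exact (hlog.sub (hasDerivAt_id x)).add hq
  have hderiv : ∀ x : ℝ, -1 < x → deriv f x = 1 / (1 + x) - 1 + x / (1 - a) :=
    fun x hx => (key x hx).deriv
  have hder_eq : ∀ x : ℝ, -1 < x → 1 / (1 + x) - 1 + x / (1 - a)
      = x * (x + a) / ((1 + x) * (1 - a)) := by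
    intro x hx
    have h1 : (1:ℝ) + x ≠ 0 := by linarith
    field_simp
    ring
  have hcont : ∀ x : ℝ, -1 < x → ContinuousAt f x := fun x hx => (key x hx).continuousAt
  have hf0 : f 0 = 0 := by simp [hf]
  have main : 0 ≤ f y := by
    rcases le_or_gt 0 y with hy0 | hy0
    · have hmono : MonotoneOn f (Set.Icc 0 a) := by
        apply monotoneOn_of_deriv_nonneg (convex_Icc 0 a)
        · intro x hx
          exact (hcont x (by simp at hx ⊢; nlinarith [hx.1])).continuousWithinAt
        · intro x hx
          rw [interior_Icc] at hx
          exact ((key x (by nlinarith [hx.1])).differentiableAt).differentiableWithinAt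
        · intro x hx
          rw [interior_Icc] at hx
          have hx1 : (-1:ℝ) < x := by nlinarith [hx.1]
          rw [hderiv x hx1, hder_eq x hx1]
          apply div_nonneg
          · nlinarith [hx.1, hx.2]
          · nlinarith [hx.1]
      have := hmono (Set.mem_Icc.2 ⟨le_refl 0, ha0⟩)
        (Set.mem_Icc.2 ⟨hy0, le_trans (le_abs_self y) hy⟩) hy0
      linarith [hf0 ▸ this]
    · have hanti : AntitoneOn f (Set.Icc (-a) 0) := by
        apply antitoneOn_of_deriv_nonpos (convex_Icc (-a) 0)
        · intro x hx
          simp only [Set.mem_Icc] at hx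
          exact (hcont x (by nlinarith [hx.1])).continuousWithinAt
        · intro x hx
          rw [interior_Icc] at hx
          exact ((key x (by nlinarith [hx.1])).differentiableAt).differentiableWithinAt
        · intro x hx
          rw [interior_Icc] at hx
          have hx1 : (-1:ℝ) < x := by nlinarith [hx.1]
          rw [hderiv x hx1, hder_eq x hx1]
          apply div_nonpos_of_nonpos_of_nonneg
          · nlinarith [hx.1, hx.2]
          · nlinarith [hx.1]
      have hym : -a ≤ y := by
        have := neg_abs_le y
        linarith [abs_le.1 (le_trans (le_refl _) hy) |>.1]
      have := hanti (Set.mem_Icc.2 ⟨hym, le_of_lt hy0⟩)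
        (Set.mem_Icc.2 ⟨neg_nonpos_of_nonneg ha0, le_refl 0⟩) (le_of_lt hy0)
      linarith [hf0 ▸ this]
  simp only [hf] at main
  linarith

lemma per_eig {n s l : ℝ} (hn : 0 < n) (hs : s < n) (hl : |l| ≤ s) :
    -Real.log (n + l) ≤ -Real.log n - l / n + l ^ 2 / (2 * n * (n - s)) := by
  have hs0 : 0 ≤ s := le_trans (abs_nonneg l) hl
  have ha : s / n < 1 := (div_lt_one hn).2 hs
  have hy : |l / n| ≤ s / n := by
    rw [abs_div, abs_of_pos hn]
    gcongr
  have key := neg_log_one_add_le ha hy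
  have hpos : (0:ℝ) < 1 + l / n := by
    have h1 := (abs_le.1 hy).1
    have : -(s/n) > -1 := by rw [gt_iff_lt, neg_lt_neg_iff]; exact ha
    linarith
  have hlogsplit : Real.log (n + l) = Real.log n + Real.log (1 + l / n) := by
    rw [← Real.log_mul (ne_of_gt hn) (ne_of_gt hpos)]
    congr 1
    field_simp
  have heq : (l / n) ^ 2 / (2 * (1 - s / n)) = l ^ 2 / (2 * n * (n - s)) := by
    rw [div_pow]
    have hn2 : n ^ 2 ≠ 0 := pow_ne_zero 2 (ne_of_gt hn)
    have hns : n - s ≠ 0 := ne_of_gt (by linarith)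
    field_simp
  rw [hlogsplit]
  have : -(Real.log n + Real.log (1 + l / n)) = -Real.log n + -Real.log (1 + l/n) := by ring
  rw [this]
  calc -Real.log n + -Real.log (1 + l/n) ≤ -Real.log n + (-(l/n) + (l/n)^2/(2*(1-s/n))) := by
        linarith
    _ = -Real.log n - l / n + l ^ 2 / (2 * n * (n - s)) := by rw [heq]; ring


lemma trace_eq_sum_eig {n : ℕ} {A : Matrix (Fin n) (Fin n) ℝ} (hA : A.IsHermitian) :
    A.trace = ∑ i, hA.eigenvalues i := by
  conv_lhs => rw [hA.spectral_theorem, Unitary.conjStarAlgAut_apply]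
  rw [Matrix.trace_mul_comm, ← Matrix.mul_assoc, Unitary.coe_star_mul_self, Matrix.one_mul,
    Matrix.trace_diagonal]
  simp

lemma trace_sq_eq_sum_eig_sq {n : ℕ} {A : Matrix (Fin n) (Fin n) ℝ} (hA : A.IsHermitian) :
    (A * A).trace = ∑ i, hA.eigenvalues i ^ 2 := by
  set U : Matrix (Fin n) (Fin n) ℝ := (hA.eigenvectorUnitary : Matrix (Fin n) (Fin n) ℝ) with hUdef
  set D : Matrix (Fin n) (Fin n) ℝ := diagonal (RCLike.ofReal ∘ hA.eigenvalues) with hDdef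
  have hU : star U * U = 1 := Unitary.coe_star_mul_self _
  have e1 : (U * D * star U) * (U * D * star U) = U * (D * D) * star U := by
    calc (U * D * star U) * (U * D * star U) = U * D * (star U * U) * D * star U := by
          noncomm_ring
      _ = U * (D * D) * star U := by rw [hU]; noncomm_ring
  conv_lhs => rw [hA.spectral_theorem, Unitary.conjStarAlgAut_apply, ← hUdef, ← hDdef, e1]
  rw [Matrix.trace_mul_comm, ← Matrix.mul_assoc, hU, Matrix.one_mul, hDdef,
    Matrix.diagonal_mul_diagonal, Matrix.trace_diagonal]
  simp [sq]

lemma det_eq_prod_eig {n : ℕ} {A : Matrix (Fin n) (Fin n) ℝ} (hA : A.IsHermitian) :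
    A.det = ∏ i, hA.eigenvalues i := by
  rw [hA.det_eq_prod_eigenvalues]
  norm_num

theorem stmt1 (n : ℕ) (h : Matrix (Fin n) (Fin n) ℝ) (hsym : h.IsSymm)
    (hnorm : Real.sqrt (∑ i, ∑ j, (h i j) ^ 2) < n) :
    -Real.log ((n : ℝ) • (1 : Matrix (Fin n) (Fin n) ℝ) + h).det ≤
      -(n : ℝ) * Real.log n - h.trace / n +
        (∑ i, ∑ j, (h i j) ^ 2) /
          (2 * n * (n - Real.sqrt (∑ i, ∑ j, (h i j) ^ 2))) := by
  set F : ℝ := ∑ i, ∑ j, (h i j) ^ 2 with hFdef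
  set s : ℝ := Real.sqrt F with hsdef
  have hF0 : 0 ≤ F := Finset.sum_nonneg fun i _ => Finset.sum_nonneg fun j _ => sq_nonneg _
  have hs0 : 0 ≤ s := Real.sqrt_nonneg _
  have hsn : s < n := hnorm
  have hn : (0:ℝ) < n := lt_of_le_of_lt hs0 hsn
  have hsF : s ^ 2 = F := Real.sq_sqrt hF0
  set A : Matrix (Fin n) (Fin n) ℝ := (n : ℝ) • (1 : Matrix (Fin n) (Fin n) ℝ) + h with hAdef
  have hA : A.IsHermitian := by
    unfold Matrix.IsHermitian
    rw [conjTranspose_eq_transpose_of_trivial, hAdef, transpose_add, transpose_smul,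
      transpose_one, hsym]
  set μ : Fin n → ℝ := hA.eigenvalues with hμdef
  -- trace of A
  have E1 : A.trace = (n:ℝ) * n + h.trace := by
    rw [hAdef, Matrix.trace_add, Matrix.trace_smul, Matrix.trace_one]
    simp [Fintype.card_fin]
  -- trace of A*A
  have entry : ∀ i j : Fin n, A i j * A j i
      = (if j = i then (n:ℝ) * n + 2 * n * h i i else 0) + h i j ^ 2 := by
    intro i j
    by_cases hj : j = i
    · subst hj
      simp [hAdef, Matrix.add_apply, Matrix.smul_apply, Matrix.one_apply_eq]
      ring
    · have hji : h j i = h i j := congrFun (congrFun hsym i) j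
      simp [hAdef, Matrix.add_apply, Matrix.smul_apply, Matrix.one_apply_ne hj,
        Matrix.one_apply_ne (Ne.symm hj), hj, hji]
      ring
  have E2 : (A * A).trace = (n:ℝ) * n * n + 2 * n * h.trace + F := by
    have : (A * A).trace = ∑ i, ∑ j, A i j * A j i := by
      simp [Matrix.trace, Matrix.diag, Matrix.mul_apply]
    rw [this]
    have : ∀ i : Fin n, ∑ j, A i j * A j i = ((n:ℝ) * n + 2 * n * h i i) + ∑ j, h i j ^ 2 := by
      intro i
      rw [Finset.sum_congr rfl fun j _ => entry i j, Finset.sum_add_distrib,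
        Finset.sum_ite_eq' Finset.univ i (fun _ => (n:ℝ) * n + 2 * n * h i i)]
      simp
    rw [Finset.sum_congr rfl fun i _ => this i, Finset.sum_add_distrib, Finset.sum_add_distrib,
      Finset.sum_const, Finset.card_univ, Fintype.card_fin, ← Finset.mul_sum]
    have htr : h.trace = ∑ i, h i i := rfl
    rw [← htr, ← hFdef]
    push_cast
    ring
  have Eμ1 : ∑ i, μ i = (n:ℝ) * n + h.trace := by rw [← trace_eq_sum_eig hA, E1]
  have Eμ2 : ∑ i, μ i ^ 2 = (n:ℝ) * n * n + 2 * n * h.trace + F := by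
    rw [← trace_sq_eq_sum_eig_sq hA, E2]
  set l : Fin n → ℝ := fun i => μ i - n with hldef
  have S1 : ∑ i, l i = h.trace := by
    simp only [hldef]
    rw [Finset.sum_sub_distrib, Finset.sum_const, Finset.card_univ, Fintype.card_fin, Eμ1]
    push_cast
    ring
  have S2 : ∑ i, l i ^ 2 = F := by
    have : ∑ i, l i ^ 2 = ∑ i, (μ i ^ 2 - 2 * (n:ℝ) * μ i + (n:ℝ) * n) :=
      Finset.sum_congr rfl fun i _ => by simp only [hldef]; ring
    rw [this, Finset.sum_add_distrib, Finset.sum_sub_distrib, Finset.sum_const,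
      Finset.card_univ, Fintype.card_fin, ← Finset.mul_sum, Eμ1, Eμ2]
    push_cast
    ring
  have hbound : ∀ i : Fin n, |l i| ≤ s := by
    intro i
    have h1 : l i ^ 2 ≤ F := by
      rw [← S2]
      exact Finset.single_le_sum (fun j _ => sq_nonneg (l j)) (Finset.mem_univ i)
    calc |l i| = Real.sqrt (l i ^ 2) := (Real.sqrt_sq_eq_abs _).symm
      _ ≤ Real.sqrt F := Real.sqrt_le_sqrt h1
      _ = s := rfl
  have hpos : ∀ i : Fin n, 0 < (n:ℝ) + l i := by
    intro i
    have := (abs_le.1 (hbound i)).1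
    linarith
  have hdet : A.det = ∏ i, ((n:ℝ) + l i) := by
    rw [det_eq_prod_eig hA]
    exact Finset.prod_congr rfl fun i _ => by simp only [hldef]; ring
  have hlog : Real.log A.det = ∑ i, Real.log ((n:ℝ) + l i) := by
    rw [hdet]
    exact Real.log_prod fun i _ => ne_of_gt (hpos i)
  calc -Real.log A.det = ∑ i, -Real.log ((n:ℝ) + l i) := by
        rw [hlog, ← Finset.sum_neg_distrib]
    _ ≤ ∑ i, (-Real.log n - l i / n + l i ^ 2 / (2 * n * (n - s))) :=
        Finset.sum_le_sum fun i _ => per_eig hn hsn (hbound i)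
    _ = -(n : ℝ) * Real.log n - h.trace / n + F / (2 * n * (n - s)) := by
        rw [Finset.sum_add_distrib, Finset.sum_sub_distrib, Finset.sum_const,
          Finset.card_univ, Fintype.card_fin, ← Finset.sum_div, ← Finset.sum_div, S1, S2]
        push_cast
        ring
end

section
/- Let λ₁, …, λ_r be real numbers with λ₁² + ⋯ + λ_r² < r². Then -∑_{i=1}^r log(1 + λᵢ/r) ≤ -(λ₁ + ⋯ + λ_r)/r + (λ₁² + ⋯ + λ_r²)/(2r(r - √(λ₁² + ⋯ + λ_r²))). -/
open Finset

lemma scalar_bound {α : ℝ} (ha : |α| < 1) :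
    -Real.log (1 + α) ≤ -α + α ^ 2 / (2 * (1 - |α|)) := by
  set a := |α| with hadef
  have ha0 : 0 ≤ a := abs_nonneg α
  have h1a : 0 < 1 - a := by linarith
  have key : ∀ n : ℕ, -Real.log (1 + α) ≤ -α + α ^ 2 / (2 * (1 - a)) + a ^ (n + 2) / (1 - a) := by
    intro n
    have hx : |(-α)| < 1 := by rwa [abs_neg]
    have H := Real.abs_log_sub_add_sum_range_le hx (n + 1)
    rw [abs_neg] at H
    have hsub : (1 : ℝ) - (-α) = 1 + α := by ring
    rw [hsub] at H
    have H1 : -Real.log (1 + α) ≤ (∑ i ∈ range (n + 1), (-α) ^ (i + 1) / (i + 1))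
        + a ^ (n + 2) / (1 - a) := by
      have := neg_le_of_abs_le H
      linarith
    have hsum : (∑ i ∈ range (n + 1), (-α) ^ (i + 1) / (i + 1)) ≤ -α + α ^ 2 / (2 * (1 - a)) := by
      rw [Finset.sum_range_succ'] 
      have h0 : (-α) ^ (0 + 1) / ((0 : ℕ) + 1 : ℝ) = -α := by norm_num
      have hterm : ∀ i : ℕ, (-α) ^ (i + 1 + 1) / ((i + 1 : ℕ) + 1 : ℝ) ≤ a ^ (i + 2) / 2 := by
        intro i
        have h1 : (-α) ^ (i + 1 + 1) / ((i + 1 : ℕ) + 1 : ℝ) ≤ |(-α) ^ (i + 1 + 1) / ((i + 1 : ℕ) + 1 : ℝ)| := le_abs_self _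
        have h2 : |(-α) ^ (i + 1 + 1) / ((i + 1 : ℕ) + 1 : ℝ)| = a ^ (i + 2) / ((i : ℝ) + 2) := by
          rw [abs_div, abs_pow, abs_neg, ← hadef]
          have hden : |((i + 1 : ℕ) + 1 : ℝ)| = (i : ℝ) + 2 := by
            rw [abs_of_pos (by positivity)]; push_cast; ring
          rw [hden]
        have h3 : a ^ (i + 2) / ((i : ℝ) + 2) ≤ a ^ (i + 2) / 2 := by
          apply div_le_div_of_nonneg_left (pow_nonneg ha0 _) (by norm_num)
          · linarith [Nat.cast_nonneg (α := ℝ) i]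
        linarith
      have hsum2 : (∑ i ∈ range n, (-α) ^ (i + 1 + 1) / ((i + 1 : ℕ) + 1 : ℝ))
          ≤ ∑ i ∈ range n, a ^ (i + 2) / 2 := Finset.sum_le_sum fun i _ => hterm i
      have hgeom : (∑ i ∈ range n, a ^ (i + 2) / 2) ≤ α ^ 2 / (2 * (1 - a)) := by
        have : (∑ i ∈ range n, a ^ (i + 2) / 2) = (a ^ 2 / 2) * ∑ i ∈ range n, a ^ i := by
          rw [Finset.mul_sum]
          apply Finset.sum_congr rfl
          intro i _
          ring
        rw [this]
        have hg : (∑ i ∈ range n, a ^ i) ≤ (1 - a)⁻¹ := by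
          have := Summable.sum_le_tsum (range n) (fun i _ => pow_nonneg ha0 i)
            (summable_geometric_of_lt_one ha0 ha)
          rwa [tsum_geometric_of_lt_one ha0 ha] at this
        have ha2 : a ^ 2 = α ^ 2 := by rw [hadef, sq_abs]
        calc (a ^ 2 / 2) * ∑ i ∈ range n, a ^ i ≤ (a ^ 2 / 2) * (1 - a)⁻¹ := by
              apply mul_le_mul_of_nonneg_left hg (by positivity)
          _ = α ^ 2 / (2 * (1 - a)) := by rw [← ha2]; field_simp
        
      push_cast at hsum2 hgeom h0 ⊢
      linarith
    linarith
  have htend : Filter.Tendsto (fun n : ℕ => -α + α ^ 2 / (2 * (1 - a)) + a ^ (n + 2) / (1 - a))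
      Filter.atTop (nhds (-α + α ^ 2 / (2 * (1 - a)) + 0)) := by
    apply Filter.Tendsto.const_add
    have : Filter.Tendsto (fun n : ℕ => a ^ (n + 2)) Filter.atTop (nhds 0) :=
      (tendsto_pow_atTop_nhds_zero_of_lt_one ha0 ha).comp (Filter.tendsto_add_atTop_nat 2)
    simpa using this.div_const (1 - a)
  have := ge_of_tendsto htend (Filter.Eventually.of_forall key)
  simpa using this

theorem stmt2 (r : ℕ) (l : Fin r → ℝ) (h : ∑ i, (l i) ^ 2 < (r : ℝ) ^ 2) :
    -∑ i, Real.log (1 + l i / r) ≤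
      -(∑ i, l i) / r +
        (∑ i, (l i) ^ 2) / (2 * r * (r - Real.sqrt (∑ i, (l i) ^ 2))) := by
  rcases Nat.eq_zero_or_pos r with hr | hr
  · subst hr
    simp at h
  have hr0 : (0 : ℝ) < r := by exact_mod_cast hr
  set S := ∑ i, (l i) ^ 2 with hS
  have hS0 : 0 ≤ S := Finset.sum_nonneg fun i _ => sq_nonneg _
  set s := Real.sqrt S with hs
  have hs0 : 0 ≤ s := Real.sqrt_nonneg _
  have hslt : s < r := by
    rw [hs]
    have : Real.sqrt S < Real.sqrt ((r : ℝ) ^ 2) := by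
      apply Real.sqrt_lt_sqrt hS0 h
    rwa [Real.sqrt_sq hr0.le] at this
  have habs : ∀ i, |l i| ≤ s := by
    intro i
    rw [hs, ← Real.sqrt_sq_eq_abs]
    apply Real.sqrt_le_sqrt
    exact Finset.single_le_sum (f := fun i => (l i) ^ 2) (fun j _ => sq_nonneg _) (Finset.mem_univ i)
  have hrs : 0 < r - s := by linarith
  have hptwise : ∀ i, -Real.log (1 + l i / r) ≤ -(l i) / r + (l i) ^ 2 / (2 * r * (r - s)) := by
    intro i
    have hli : |l i| < r := lt_of_le_of_lt (habs i) hslt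
    have hai : |l i / r| < 1 := by
      rw [abs_div, abs_of_pos hr0, div_lt_one hr0]; exact hli
    have h1 := scalar_bound hai
    have e0 : |l i / r| = |l i| / r := by rw [abs_div, abs_of_pos hr0]
    have hdpos : 0 < r - |l i| := by linarith
    have e1 : (l i / r) ^ 2 / (2 * (1 - |l i| / r)) = (l i) ^ 2 / (2 * r * (r - |l i|)) := by
      field_simp
    have h2 : (l i) ^ 2 / (2 * r * (r - |l i|)) ≤ (l i) ^ 2 / (2 * r * (r - s)) := by
      apply div_le_div_of_nonneg_left (sq_nonneg _) (by positivity)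
      nlinarith [habs i]
    have e2 : -(l i / r) = -(l i) / r := by ring
    rw [e0, e1, e2] at h1
    linarith
  calc -∑ i, Real.log (1 + l i / r) = ∑ i, -Real.log (1 + l i / r) := by
        rw [← Finset.sum_neg_distrib]
    _ ≤ ∑ i, (-(l i) / r + (l i) ^ 2 / (2 * r * (r - s))) :=
        Finset.sum_le_sum fun i _ => hptwise i
    _ = -(∑ i, l i) / r + S / (2 * r * (r - s)) := by
        rw [Finset.sum_add_distrib, ← Finset.sum_div, ← Finset.sum_div, ← Finset.sum_neg_distrib]
end

section
/- For ρ > 1, the function ψ(z) = -z(ρ-1) + z²ρ²/(2(1-ρz)) on the interval (0, 1/ρ) attains its minimum at z_ρ = 1/ρ - 1/√(ρ(3ρ-2)), and ψ(z_ρ) = √(3 - 2/ρ) + 1/ρ - 2. -/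
theorem stmt3 (ρ : ℝ) (hρ : 1 < ρ) :
    (1 / ρ - 1 / Real.sqrt (ρ * (3 * ρ - 2))) ∈ Set.Ioo 0 (1 / ρ) ∧
    (∀ z ∈ Set.Ioo (0 : ℝ) (1 / ρ),
      -(1 / ρ - 1 / Real.sqrt (ρ * (3 * ρ - 2))) * (ρ - 1) +
          (1 / ρ - 1 / Real.sqrt (ρ * (3 * ρ - 2))) ^ 2 * ρ ^ 2 /
            (2 * (1 - ρ * (1 / ρ - 1 / Real.sqrt (ρ * (3 * ρ - 2))))) ≤
        -z * (ρ - 1) + z ^ 2 * ρ ^ 2 / (2 * (1 - ρ * z))) ∧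
    -(1 / ρ - 1 / Real.sqrt (ρ * (3 * ρ - 2))) * (ρ - 1) +
        (1 / ρ - 1 / Real.sqrt (ρ * (3 * ρ - 2))) ^ 2 * ρ ^ 2 /
          (2 * (1 - ρ * (1 / ρ - 1 / Real.sqrt (ρ * (3 * ρ - 2))))) =
      Real.sqrt (3 - 2 / ρ) + 1 / ρ - 2 := by
  have hρ0 : 0 < ρ := by linarith
  have h3 : 0 < ρ * (3 * ρ - 2) := by nlinarith
  set s := Real.sqrt (ρ * (3 * ρ - 2)) with hs
  have hs2 : s ^ 2 = ρ * (3 * ρ - 2) := Real.sq_sqrt h3.le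
  have hs0 : 0 < s := Real.sqrt_pos.mpr h3
  have hsρ : ρ < s := by nlinarith
  have hu : 1 - ρ * (1 / ρ - 1 / s) = ρ / s := by field_simp; ring
  have hsqrt : Real.sqrt (3 - 2 / ρ) = s / ρ := by
    have h1 : 3 - 2 / ρ = (s / ρ) ^ 2 := by
      field_simp
      nlinarith [hs2]
    rw [h1, Real.sqrt_sq (by positivity)]
  have heq : -(1 / ρ - 1 / s) * (ρ - 1) + (1 / ρ - 1 / s) ^ 2 * ρ ^ 2 /
      (2 * (1 - ρ * (1 / ρ - 1 / s))) = s / ρ + 1 / ρ - 2 := by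
    rw [hu]
    field_simp
    linear_combination (-1) * hs2
  refine ⟨⟨sub_pos.mpr (one_div_lt_one_div_of_lt hρ0 hsρ),
      sub_lt_self _ (by positivity)⟩, ?_, by rw [heq, hsqrt]⟩
  intro z hz
  rw [heq]
  have hu2 : 0 < 1 - ρ * z := by
    have := hz.2
    rw [lt_div_iff₀ hρ0] at this
    nlinarith
  have hkey : (-z * (ρ - 1) + z ^ 2 * ρ ^ 2 / (2 * (1 - ρ * z))) - (s / ρ + 1 / ρ - 2)
      = (ρ - (1 - ρ * z) * s) ^ 2 / (2 * (1 - ρ * z) * ρ ^ 2) := by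
    have hu3 : 1 - z * ρ ≠ 0 := by nlinarith
    field_simp
    linear_combination (-(1 - z * ρ) ^ 2) * hs2
  nlinarith [hkey, sq_nonneg (ρ - (1 - ρ * z) * s), div_nonneg (sq_nonneg (ρ - (1 - ρ * z) * s)) (by positivity : (0:ℝ) ≤ 2 * (1 - ρ * z) * ρ ^ 2)]
end
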